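/- Let F be a differential field whose field of constants K is algebraically closed. Every M ∈ F^{2×2} with M M' = M' M is of Type 1. -/

import Mathlib

def IsDeriv {F : Type*} [Field F] (d : F → F) : Prop :=
  (∀ a b, d (a + b) = d a + d b) ∧ (∀ a b, d (a * b) = d a * b + a * d b)

/-- `M` is of Type 1: an `F`-linear combination of pairwise commuting matrices
with constant entries. -/
def IsType1 {F : Type*} [Field F] (d : F → F) {n : ℕ}
    (M : Matrix (Fin n) (Fin n) F) : Prop :=
  ∃ (k : ℕ) (f : Fin k → F) (C : Fin k → Matrix (Fin n) (Fin n) F),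
    (∀ j p q, d (C j p q) = 0) ∧
    (∀ i j, C i * C j = C j * C i) ∧
    M = ∑ j, f j • C j

lemma dzero {F : Type*} [Field F] {d : F → F} (hd : IsDeriv d) : d 0 = 0 := by
  have h : d 0 = d 0 + d 0 := by simpa using (hd.1 0 0).symm
  linear_combination -h

lemma done' {F : Type*} [Field F] {d : F → F} (hd : IsDeriv d) : d 1 = 0 := by
  have h : d 1 = d 1 + d 1 := by simpa using hd.2 1 1
  linear_combination -h

lemma dsub {F : Type*} [Field F] {d : F → F} (hd : IsDeriv d) (x y : F) :
    d (x - y) = d x - d y := by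
  have h := hd.1 (x - y) y
  rw [sub_add_cancel] at h
  linear_combination -h

lemma ddiv {F : Type*} [Field F] {d : F → F} (hd : IsDeriv d) {g x : F} (hg : g ≠ 0)
    (h : g * d x = x * d g) : d (x / g) = 0 := by
  have h1 := hd.2 (x / g) g
  rw [div_mul_cancel₀ x hg] at h1
  have h3 : x / g * d g = d x := by
    field_simp
    linear_combination -h
  rw [h3] at h1
  have h2 : d (x / g) * g = 0 := by linear_combination -h1
  exact (mul_eq_zero.mp h2).resolve_right hg

lemma key {F : Type*} [Field F] {d : F → F} (hd : IsDeriv d)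
    (M : Matrix (Fin 2) (Fin 2) F) (g : F) (hg : g ≠ 0)
    (hb : g * d (M 0 1) = M 0 1 * d g)
    (hc : g * d (M 1 0) = M 1 0 * d g)
    (hu : g * d (M 1 1 - M 0 0) = (M 1 1 - M 0 0) * d g) : IsType1 d M := by
  refine ⟨2, ![M 0 0, g], ![1, !![0, M 0 1 / g; M 1 0 / g, (M 1 1 - M 0 0) / g]], ?_, ?_, ?_⟩
  · intro j p q
    fin_cases j <;> fin_cases p <;> fin_cases q <;>
      simp [Matrix.one_apply, dzero hd, done' hd, ddiv hd hg hb, ddiv hd hg hc, ddiv hd hg hu]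
  · intro i j
    fin_cases i <;> fin_cases j <;> simp
  · ext p q
    fin_cases p <;> fin_cases q <;>
      simp [Fin.sum_univ_two, Matrix.one_apply] <;> field_simp <;> ring

/-- Over a differential field with algebraically closed field of constants,
every `2×2` matrix commuting with its derivative is of Type 1. -/
theorem two_by_two_type1 {F : Type*} [Field F]
    (d : F → F) (hd : IsDeriv d)
    (K : Subfield F) (hK : ∀ x, x ∈ K ↔ d x = 0) (hKalg : IsAlgClosed K)
    (M : Matrix (Fin 2) (Fin 2) F)
    (hcomm : M * M.map d = M.map d * M) :
    IsType1 d M := by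
  have h00 := congr_fun (congr_fun hcomm 0) 0
  have h01 := congr_fun (congr_fun hcomm 0) 1
  have h10 := congr_fun (congr_fun hcomm 1) 0
  simp [Matrix.mul_apply, Matrix.map_apply, Fin.sum_univ_two] at h00 h01 h10
  have Wbc : M 0 1 * d (M 1 0) = M 1 0 * d (M 0 1) := by linear_combination h00
  have Wbu : M 0 1 * d (M 1 1 - M 0 0) = (M 1 1 - M 0 0) * d (M 0 1) := by
    rw [dsub hd]; linear_combination h01
  have Wcu : M 1 0 * d (M 1 1 - M 0 0) = (M 1 1 - M 0 0) * d (M 1 0) := by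
    rw [dsub hd]; linear_combination -h10
  by_cases hb : M 0 1 = 0
  · by_cases hc : M 1 0 = 0
    · by_cases hu : M 1 1 - M 0 0 = 0
      · refine ⟨1, ![M 0 0], ![1], ?_, ?_, ?_⟩
        · intro j p q
          fin_cases j <;> fin_cases p <;> fin_cases q <;>
            simp [Matrix.one_apply, dzero hd, done' hd]
        · intro i j; fin_cases i <;> fin_cases j <;> simp
        · ext p q
          have he : M 1 1 = M 0 0 := by linear_combination hu
          fin_cases p <;> fin_cases q <;>
            simp [Fin.sum_univ_one, Matrix.one_apply, hb, hc, he]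
      · refine key hd M _ hu ?_ ?_ ?_
        · rw [hb, dzero hd]; ring
        · rw [hc, dzero hd]; ring
        · ring
    · refine key hd M _ hc ?_ ?_ ?_
      · rw [hb, dzero hd]; ring
      · ring
      · exact Wcu
  · refine key hd M _ hb ?_ ?_ ?_
    · ring
    · linear_combination Wbc
    · exact Wbu
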